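/- Let f : X → Y be a continuous surjection of compact Hausdorff spaces. If the induced map f₊ : M(X) → M(Y), μ ↦ μ ∘ f⁻¹, is semi-open, then f is semi-open. -/

import Mathlib

open MeasureTheory Set Filter
open scoped NNReal ENNReal BoundedContinuousFunction Topology

/-- A continuous surjection `g : A → B` is *semi-open* if for every nonempty open set
`U ⊆ A`, the interior of the image `g '' U` is nonempty. -/
def SemiOpen {A B : Type*} [TopologicalSpace A] [TopologicalSpace B] (g : A → B) : Prop :=
  ∀ U : Set A, IsOpen U → U.Nonempty → (interior (g '' U)).Nonempty

lemma approx_lemma {Y : Type*} [TopologicalSpace Y] [MeasurableSpace Y] [OpensMeasurableSpace Y]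
    [CompactSpace Y] {K : Set Y} (hK : MeasurableSet K) (hKc : Dense Kᶜ)
    (ν₀ : ProbabilityMeasure Y) (F : Finset (Y →ᵇ ℝ≥0)) {ε : ℝ≥0} (hε : 0 < ε) :
    ∃ ν : ProbabilityMeasure Y, (ν : Measure Y) K = 0 ∧
      ∀ g ∈ F, (∫⁻ y, g y ∂(ν : Measure Y)) ≤ (∫⁻ y, g y ∂(ν₀ : Measure Y)) + ε ∧
        (∫⁻ y, g y ∂(ν₀ : Measure Y)) ≤ (∫⁻ y, g y ∂(ν : Measure Y)) + ε := by
  classical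
  haveI : Nonempty Y := ν₀.nonempty
  have hε2 : (0 : ℝ≥0) < ε / 2 := by positivity
  -- the basic open sets on which each g ∈ F oscillates by less than ε
  set U : Y → Set Y := fun y => ⋂ g ∈ F, {x | g x < g y + ε / 2 ∧ g y < g x + ε / 2} with hU
  have hUopen : ∀ y, IsOpen (U y) := by
    intro y
    apply isOpen_biInter_finset
    intro g _
    have h1 : IsOpen {x | g x < g y + ε / 2} :=
      isOpen_lt (by continuity) continuous_const
    have h2 : IsOpen {x | g y < g x + ε / 2} :=
      isOpen_lt continuous_const (by continuity)
    exact h1.inter h2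
  have hymem : ∀ y, y ∈ U y := by
    intro y
    simp only [hU, mem_iInter, mem_setOf_eq]
    intro g _
    exact ⟨lt_add_of_pos_right _ hε2, lt_add_of_pos_right _ hε2⟩
  -- key property of U y
  have hosc : ∀ y, ∀ g ∈ F, ∀ x ∈ U y, ∀ x' ∈ U y, g x < g x' + ε := by
    intro y g hg x hx x' hx'
    simp only [hU, mem_iInter, mem_setOf_eq] at hx hx'
    obtain ⟨h1, _⟩ := hx g hg
    obtain ⟨_, h4⟩ := hx' g hg
    calc g x < g y + ε / 2 := h1
    _ < (g x' + ε / 2) + ε / 2 := by exact add_lt_add_of_lt_of_le h4 le_rfl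
    _ = g x' + ε := by rw [add_assoc, add_halves]
  obtain ⟨t, ht⟩ := CompactSpace.elim_nhds_subcover U (fun y => (hUopen y).mem_nhds (hymem y))
  set L := t.toList with hL
  set n := L.length with hn
  set O : ℕ → Set Y := fun j => if h : j < n then U (L.get ⟨j, h⟩) else ∅ with hO
  have hOopen : ∀ j, IsOpen (O j) := by
    intro j
    by_cases h : j < n <;> simp [hO, h, hUopen, isOpen_empty]
  have hOunion : ⋃ j, O j = univ := by
    apply eq_univ_of_forall
    intro x
    have : x ∈ ⋃ y ∈ t, U y := ht ▸ mem_univ x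
    obtain ⟨y, hyt, hxy⟩ := mem_iUnion₂.mp this
    have hyL : y ∈ L := Finset.mem_toList.mpr hyt
    obtain ⟨j, hjy⟩ := List.mem_iff_get.mp hyL
    refine mem_iUnion.mpr ⟨j.1, ?_⟩
    simp only [hO, j.2, dif_pos]
    rw [dif_pos (show (j:ℕ) < n from j.2)]; show x ∈ U (L.get j); rw [hjy]
    exact hxy
  set B : ℕ → Set Y := disjointed O with hB
  have hBmeas : ∀ j, MeasurableSet (B j) :=
    MeasurableSet.disjointed (fun j => (hOopen j).measurableSet)
  have hBdisj : Pairwise (Function.onFun Disjoint B) := disjoint_disjointed O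
  have hBsub : ∀ j, B j ⊆ O j := disjointed_subset O
  have hBunion : ⋃ j, B j = univ := by rw [hB, iUnion_disjointed, hOunion]
  have hBempty : ∀ j, ¬ j < n → B j = ∅ := by
    intro j hj
    have : O j = ∅ := by simp [hO, hj]
    exact eq_empty_of_subset_empty (this ▸ hBsub j)
  -- choose points avoiding K
  set z : ℕ → Y := fun j => if h : (O j \ K).Nonempty then h.choose else Classical.arbitrary Y
    with hz
  have hzmem : ∀ j, (O j).Nonempty → z j ∈ O j ∧ z j ∉ K := by
    intro j hOj
    have hne : (O j \ K).Nonempty := by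
      have := hKc.inter_open_nonempty (O j) (hOopen j) hOj
      rwa [Set.diff_eq]
    simp only [hz, dif_pos hne]
    have := hne.choose_spec
    exact ⟨this.1, this.2⟩
  set w : ℕ → ℝ≥0∞ := fun j => (ν₀ : Measure Y) (B j) with hw
  set m : Measure Y := ∑ j ∈ Finset.range n, w j • Measure.dirac (z j) with hm
  have hsum_w : ∑ j ∈ Finset.range n, w j = 1 := by
    have h1 : ∑' j, w j = ∑ j ∈ Finset.range n, w j := by
      apply tsum_eq_sum
      intro j hj
      simp only [Finset.mem_range] at hj
      simp [hw, hBempty j hj]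
    have h2 : ∑' j, w j = (ν₀ : Measure Y) univ := by
      rw [hw, ← measure_iUnion hBdisj hBmeas, hBunion]
    rw [← h1, h2, measure_univ]
  have hmprob : IsProbabilityMeasure m := by
    constructor
    rw [hm]
    simp only [Measure.coe_finset_sum, Finset.sum_apply, Measure.smul_apply, smul_eq_mul]
    simp only [Measure.dirac_apply' _ MeasurableSet.univ, mem_univ, indicator_of_mem,
      Pi.one_apply, mul_one]
    exact hsum_w
  refine ⟨⟨m, hmprob⟩, ?_, ?_⟩
  · show m K = 0
    rw [hm]
    simp only [Measure.coe_finset_sum, Finset.sum_apply, Measure.smul_apply, smul_eq_mul]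
    apply Finset.sum_eq_zero
    intro j hj
    by_cases hBj : (B j).Nonempty
    · have hOj : (O j).Nonempty := hBj.mono (hBsub j)
      have := (hzmem j hOj).2
      rw [Measure.dirac_apply' _ hK, indicator_of_notMem this, mul_zero]
    · rw [not_nonempty_iff_eq_empty] at hBj
      simp [hw, hBj]
  · intro g hg
    have hgmeas : Measurable fun y => (g y : ℝ≥0∞) :=
      measurable_coe_nnreal_ennreal.comp g.continuous.measurable
    have hint_m : ∫⁻ y, g y ∂m = ∑ j ∈ Finset.range n, w j * g (z j) := by
      rw [hm, lintegral_finset_sum_measure]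
      exact Finset.sum_congr rfl fun j _ => by
        rw [lintegral_smul_measure, lintegral_dirac' _ hgmeas, smul_eq_mul]
    have hint_ν₀ : ∫⁻ y, g y ∂(ν₀ : Measure Y)
        = ∑ j ∈ Finset.range n, ∫⁻ y in B j, g y ∂(ν₀ : Measure Y) := by
      rw [← setLIntegral_univ, ← hBunion, lintegral_iUnion hBmeas hBdisj]
      apply tsum_eq_sum
      intro j hj
      simp only [Finset.mem_range] at hj
      simp [hBempty j hj]
    -- per-piece bounds
    have key : ∀ j ∈ Finset.range n,
        (w j * g (z j) ≤ (∫⁻ y in B j, g y ∂(ν₀ : Measure Y)) + ε * w j) ∧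
        ((∫⁻ y in B j, g y ∂(ν₀ : Measure Y)) ≤ w j * g (z j) + ε * w j) := by
      intro j hj
      by_cases hBj : (B j).Nonempty
      · have hOj : (O j).Nonempty := hBj.mono (hBsub j)
        obtain ⟨hzO, _⟩ := hzmem j hOj
        have hjn : j < n := Finset.mem_range.mp hj
        have hOeq : O j = U (L.get ⟨j, hjn⟩) := by simp [hO, hjn]
        set y := L.get ⟨j, hjn⟩
        constructor
        · -- w j * g (z j) ≤ ∫_{B j} g + ε * w j
          have : ∀ x ∈ B j, (g (z j) : ℝ≥0∞) ≤ (g x : ℝ≥0∞) + ε := by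
            intro x hx
            have := hosc y g hg (z j) (hOeq ▸ hzO) x (hOeq ▸ hBsub j hx)
            exact_mod_cast this.le
          calc w j * g (z j) = ∫⁻ _ in B j, (g (z j) : ℝ≥0∞) ∂(ν₀ : Measure Y) := by
                rw [setLIntegral_const, mul_comm]
          _ ≤ ∫⁻ x in B j, ((g x : ℝ≥0∞) + ε) ∂(ν₀ : Measure Y) := by
                apply setLIntegral_mono' (hBmeas j)
                exact this
          _ = (∫⁻ y in B j, g y ∂(ν₀ : Measure Y)) + ε * w j := by
                rw [lintegral_add_right _ measurable_const, setLIntegral_const, mul_comm (ε : ℝ≥0∞)]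
        · have : ∀ x ∈ B j, (g x : ℝ≥0∞) ≤ (g (z j) : ℝ≥0∞) + ε := by
            intro x hx
            have := hosc y g hg x (hOeq ▸ hBsub j hx) (z j) (hOeq ▸ hzO)
            exact_mod_cast this.le
          calc (∫⁻ y in B j, g y ∂(ν₀ : Measure Y))
              ≤ ∫⁻ _ in B j, ((g (z j) : ℝ≥0∞) + ε) ∂(ν₀ : Measure Y) := by
                apply setLIntegral_mono' (hBmeas j)
                exact this
          _ = w j * g (z j) + ε * w j := by
                rw [setLIntegral_const, add_mul, mul_comm (ε:ℝ≥0∞), mul_comm _ (w j)]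
      · rw [not_nonempty_iff_eq_empty] at hBj
        simp [hw, hBj]
    constructor
    · show ∫⁻ y, g y ∂m ≤ _
      rw [hint_m, hint_ν₀]
      calc ∑ j ∈ Finset.range n, w j * g (z j)
          ≤ ∑ j ∈ Finset.range n, ((∫⁻ y in B j, g y ∂(ν₀ : Measure Y)) + ε * w j) :=
            Finset.sum_le_sum (fun j hj => (key j hj).1)
      _ = (∑ j ∈ Finset.range n, ∫⁻ y in B j, g y ∂(ν₀ : Measure Y)) + ε := by
            rw [Finset.sum_add_distrib, ← Finset.mul_sum, hsum_w, mul_one]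
    · show _ ≤ (∫⁻ y, g y ∂m) + _
      rw [hint_m, hint_ν₀]
      calc ∑ j ∈ Finset.range n, ∫⁻ y in B j, g y ∂(ν₀ : Measure Y)
          ≤ ∑ j ∈ Finset.range n, (w j * g (z j) + ε * w j) :=
            Finset.sum_le_sum (fun j hj => (key j hj).2)
      _ = (∑ j ∈ Finset.range n, w j * g (z j)) + ε := by
            rw [Finset.sum_add_distrib, ← Finset.mul_sum, hsum_w, mul_one]

lemma dense_vanishing {Y : Type*} [TopologicalSpace Y] [MeasurableSpace Y]
    [OpensMeasurableSpace Y] [CompactSpace Y]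
    {K : Set Y} (hK : MeasurableSet K) (hKc : Dense Kᶜ) :
    Dense {ν : ProbabilityMeasure Y | (ν : Measure Y) K = 0} := by
  classical
  intro ν₀
  have hch : ∀ i : Finset (Y →ᵇ ℝ≥0) × ℕ,
      ∃ ν : ProbabilityMeasure Y, (ν : Measure Y) K = 0 ∧
      ∀ g ∈ i.1, (∫⁻ y, g y ∂(ν : Measure Y)) ≤ (∫⁻ y, g y ∂(ν₀ : Measure Y)) + ((i.2 : ℝ≥0) + 1)⁻¹ ∧
        (∫⁻ y, g y ∂(ν₀ : Measure Y)) ≤ (∫⁻ y, g y ∂(ν : Measure Y)) + ((i.2 : ℝ≥0) + 1)⁻¹ := by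
    intro i
    exact approx_lemma hK hKc ν₀ i.1 (ε := ((i.2 : ℝ≥0) + 1)⁻¹) (by positivity)
  choose ν hν0 hν using hch
  have htend : Tendsto ν atTop (𝓝 ν₀) := by
    rw [ProbabilityMeasure.tendsto_iff_forall_lintegral_tendsto]
    intro g
    have hfin : (∫⁻ y, g y ∂(ν₀ : Measure Y)) ≠ ⊤ :=
      (g.lintegral_lt_top_of_nnreal (ν₀ : Measure Y)).ne
    rw [ENNReal.tendsto_nhds hfin]
    intro δ hδ
    obtain ⟨N, hN⟩ := ENNReal.exists_inv_nat_lt (ne_of_gt hδ)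
    rw [eventually_atTop]
    refine ⟨({g}, N), ?_⟩
    rintro ⟨F, k⟩ hik
    obtain ⟨hF, hk⟩ := hik
    simp only [Finset.le_eq_subset, Finset.singleton_subset_iff] at hF
    have hεδ : ((((k : ℝ≥0) + 1)⁻¹ : ℝ≥0) : ℝ≥0∞) ≤ δ := by
      have h1 : ((((k : ℝ≥0) + 1)⁻¹ : ℝ≥0) : ℝ≥0∞) = ((k : ℝ≥0∞) + 1)⁻¹ := by
        rw [ENNReal.coe_inv (add_pos_of_nonneg_of_pos zero_le one_pos).ne']
        norm_cast
        rw [ENNReal.coe_inv (by positivity), ENNReal.coe_natCast]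
      rw [h1]
      refine le_trans ?_ hN.le
      apply ENNReal.inv_le_inv.mpr
      have : (N : ℝ≥0∞) ≤ (k : ℝ≥0∞) := by exact_mod_cast hk
      exact le_trans this (le_add_of_nonneg_right zero_le_one)
    obtain ⟨h1, h2⟩ := hν (F, k) g hF
    constructor
    · rw [tsub_le_iff_right]
      exact le_trans h2 (add_le_add le_rfl hεδ)
    · exact le_trans h1 (add_le_add le_rfl hεδ)
  exact mem_closure_of_tendsto htend (Eventually.of_forall hν0)

/-- Theorem B''. If the pushforward map `f₊ : M(X) → M(Y)` on probability measures
(with the weak-* topology) is semi-open, then `f` is semi-open. -/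
theorem semiOpen_of_semiOpen_pushforward
    {X Y : Type*} [TopologicalSpace X] [CompactSpace X] [T2Space X]
    [MeasurableSpace X] [BorelSpace X]
    [TopologicalSpace Y] [CompactSpace Y] [T2Space Y]
    [MeasurableSpace Y] [BorelSpace Y]
    {f : X → Y} (hf : Continuous f) (hsurj : Function.Surjective f)
    (h : SemiOpen (fun μ : MeasureTheory.ProbabilityMeasure X =>
      μ.map hf.measurable.aemeasurable)) :
    SemiOpen f := by
  classical
  rintro U hU ⟨x₀, hx₀⟩
  -- a compact set squeezed between x₀ and U
  obtain ⟨C, hC, hxC, hCU⟩ := exists_compact_between isCompact_singleton hU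
    (singleton_subset_iff.mpr hx₀)
  have hx₀C : x₀ ∈ interior C := hxC rfl
  -- Urysohn function
  obtain ⟨fR, hf0, hf1, hf01⟩ := exists_continuous_zero_one_of_isClosed
    (isOpen_interior.isClosed_compl) (isClosed_singleton (x := x₀))
    (by simpa [disjoint_singleton_right] using hx₀C)
  set g : X →ᵇ ℝ≥0 := BoundedContinuousFunction.mkOfCompact
    ⟨fun x => Real.toNNReal (fR x), continuous_real_toNNReal.comp fR.continuous⟩ with hg
  have hg_le_one : ∀ x, g x ≤ 1 := by
    intro x
    simp only [hg, BoundedContinuousFunction.mkOfCompact_apply, ContinuousMap.coe_mk]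
    exact Real.toNNReal_le_one.mpr (hf01 x).2
  have hg_zero : ∀ x, x ∉ interior C → g x = 0 := by
    intro x hx
    simp only [hg, BoundedContinuousFunction.mkOfCompact_apply, ContinuousMap.coe_mk]
    rw [hf0 hx]
    simp
  have hg_x₀ : g x₀ = 1 := by
    simp only [hg, BoundedContinuousFunction.mkOfCompact_apply, ContinuousMap.coe_mk]
    rw [hf1 rfl]
    simp
  -- the open set V of measures
  set V : Set (ProbabilityMeasure X) :=
    {μ | (1/2 : ℝ≥0∞) < ∫⁻ x, g x ∂(μ : Measure X)} with hV
  have hVopen : IsOpen V := by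
    have hcont : Continuous fun μ : ProbabilityMeasure X => ∫⁻ x, g x ∂(μ : Measure X) := by
      have : (fun μ : ProbabilityMeasure X => ∫⁻ x, g x ∂(μ : Measure X))
          = fun μ : ProbabilityMeasure X =>
            ((μ.toFiniteMeasure.testAgainstNN g : ℝ≥0) : ℝ≥0∞) := by
        funext μ
        rw [FiniteMeasure.testAgainstNN_coe_eq]
        rfl
      rw [this]
      exact ENNReal.continuous_coe.comp (ProbabilityMeasure.continuous_testAgainstNN_eval g)
    exact hcont.isOpen_preimage (Ioi (1/2 : ℝ≥0∞)) isOpen_Ioi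
  have hgmeas : Measurable fun x => (g x : ℝ≥0∞) :=
    measurable_coe_nnreal_ennreal.comp g.continuous.measurable
  have hVne : V.Nonempty := by
    refine ⟨⟨Measure.dirac x₀, inferInstance⟩, ?_⟩
    simp only [hV, mem_setOf_eq]
    have hd : (∫⁻ x, (g x : ℝ≥0∞)
        ∂((⟨Measure.dirac x₀, inferInstance⟩ : ProbabilityMeasure X) : Measure X))
        = ((g x₀ : ℝ≥0) : ℝ≥0∞) := lintegral_dirac' _ hgmeas
    have h1 : (1/2 : ℝ≥0∞) < ((g x₀ : ℝ≥0) : ℝ≥0∞) := by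
      rw [hg_x₀]; norm_num
    exact h1.trans_eq hd.symm
  -- apply semi-openness of the pushforward
  obtain ⟨ν₀, hν₀⟩ := h V hVopen hVne
  -- the compact set K
  set K : Set Y := f '' C with hK
  have hKcompact : IsCompact K := hC.image hf
  have hKclosed : IsClosed K := hKcompact.isClosed
  have hKmeas : MeasurableSet K := hKclosed.measurableSet
  have hKsub : K ⊆ f '' U := image_mono hCU
  -- measures in the image of V give K mass > 1/2
  have himg : ∀ ν ∈ (fun μ : ProbabilityMeasure X => μ.map hf.measurable.aemeasurable) '' V,
      (1/2 : ℝ≥0∞) < (ν : Measure Y) K := by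
    rintro ν ⟨μ, hμV, rfl⟩
    have h1 : ((μ.map hf.measurable.aemeasurable : ProbabilityMeasure Y) : Measure Y) K
        = (μ : Measure X) (f ⁻¹' K) := by
      rw [ProbabilityMeasure.toMeasure_map, Measure.map_apply hf.measurable hKmeas]
    rw [h1]
    have h2 : (1/2 : ℝ≥0∞) < (μ : Measure X) (interior C) := by
      refine lt_of_lt_of_le hμV ?_
      have : ∀ x, (g x : ℝ≥0∞) ≤ (interior C).indicator (fun _ => 1) x := by
        intro x
        by_cases hx : x ∈ interior C
        · rw [indicator_of_mem hx]
          exact_mod_cast hg_le_one x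
        · rw [indicator_of_notMem hx, hg_zero x hx]
          simp
      calc ∫⁻ x, g x ∂(μ : Measure X)
          ≤ ∫⁻ x, (interior C).indicator (fun _ => 1) x ∂(μ : Measure X) := lintegral_mono this
      _ = (μ : Measure X) (interior C) := lintegral_indicator_one isOpen_interior.measurableSet
    exact lt_of_lt_of_le h2 (measure_mono (interior_subset.trans (subset_preimage_image f C)))
  -- suppose the interior of f '' U is empty
  by_contra hcon
  rw [not_nonempty_iff_eq_empty] at hcon
  have hKint : interior K = ∅ :=
    eq_empty_of_subset_empty (hcon ▸ interior_mono hKsub)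
  have hKdense : Dense Kᶜ := interior_eq_empty_iff_dense_compl.mp hKint
  have hS := dense_vanishing hKmeas hKdense
  obtain ⟨ν, hνW, hνS⟩ := hS.inter_open_nonempty _ isOpen_interior ⟨ν₀, hν₀⟩
  have : (1/2 : ℝ≥0∞) < (ν : Measure Y) K := himg ν (interior_subset hνW)
  rw [hνS] at this
  simp at this
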